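/- For every n×n real matrix A that is tropical totally nonnegative (A ∈ TNtrop(ℝ)), the matrix W := φ(A) satisfies the weak trapeze and weak parallelogram inequalities and the tropical transfer matrix T(W) equals A entrywise; in particular every tropical totally nonnegative matrix with real entries is the tropical transfer matrix of the canonical planar network G_n for some real weight matrix. -/

import Mathlib

open Finset

/-- Truncated predecessor in `Fin n` (1-indexed entry `i-1`). -/
def fpred {n : ℕ} (j : Fin n) : Fin n :=
  ⟨j.val - 1, Nat.lt_of_le_of_lt (Nat.sub_le _ _) j.isLt⟩

/-- `ψ(W)_{i,j}` is the tropical weight of the uppermost path from source `i`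
to target `j` in the canonical planar network `G_n`. -/
def psi (n : ℕ) (W : Matrix (Fin n) (Fin n) ℝ) : Matrix (Fin n) (Fin n) ℝ :=
  fun i j => if i ≤ j then ∑ t ∈ Finset.Icc i j, W i t else ∑ t ∈ Finset.Icc j i, W t j

/-- The map `φ`, inverse of `ψ`. -/
def phi (n : ℕ) (A : Matrix (Fin n) (Fin n) ℝ) : Matrix (Fin n) (Fin n) ℝ :=
  fun i j =>
    if i = j then A i j
    else if i < j then A i j - A i (fpred j)
    else A i j - A (fpred i) j

/-- Weak trapeze inequalities. -/
def WeakTrapeze (n : ℕ) (W : Matrix (Fin n) (Fin n) ℝ) : Prop :=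
  ∀ i : Fin n, 0 < i.val →
    W i (fpred i) + W (fpred i) (fpred i) + W (fpred i) i ≤ W i i

/-- Strict trapeze inequalities. -/
def StrictTrapeze (n : ℕ) (W : Matrix (Fin n) (Fin n) ℝ) : Prop :=
  ∀ i : Fin n, 0 < i.val →
    W i (fpred i) + W (fpred i) (fpred i) + W (fpred i) i < W i i

/-- Weak parallelogram inequalities. -/
def WeakPara (n : ℕ) (W : Matrix (Fin n) (Fin n) ℝ) : Prop :=
  ∀ i j : Fin n, ∀ _h : j.val + 2 ≤ i.val,
    W i j ≤ W i ⟨j.val + 1, by have := i.isLt; omega⟩ ∧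
    W j i ≤ W ⟨j.val + 1, by have := i.isLt; omega⟩ i

/-- Strict parallelogram inequalities. -/
def StrictPara (n : ℕ) (W : Matrix (Fin n) (Fin n) ℝ) : Prop :=
  ∀ i j : Fin n, ∀ _h : j.val + 2 ≤ i.val,
    W i j < W i ⟨j.val + 1, by have := i.isLt; omega⟩ ∧
    W j i < W ⟨j.val + 1, by have := i.isLt; omega⟩ i

/-- Maximum, over the permutations of sign `ε`, of the tropical weight of the
permutation in the `k × k` matrix `B` (computed in `WithBot ℝ`, the maximum over
the empty set being `⊥ = -∞`). -/
def tropPermSup (k : ℕ) (ε : ℤˣ) (B : Matrix (Fin k) (Fin k) (WithBot ℝ)) : WithBot ℝ :=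
  (Finset.univ.filter fun σ : Equiv.Perm (Fin k) => Equiv.Perm.sign σ = ε).sup
    fun σ => ∑ i, B i (σ i)

/-- Tropical total nonnegativity of a matrix over `ℝ ∪ {-∞}`. -/
def IsTropTN (n : ℕ) (A : Matrix (Fin n) (Fin n) (WithBot ℝ)) : Prop :=
  ∀ (k : ℕ) (r c : Fin k → Fin n), StrictMono r → StrictMono c →
    tropPermSup k (-1) (A.submatrix r c) ≤ tropPermSup k 1 (A.submatrix r c)

/-- Tropical total positivity of a real matrix. -/
def IsTropTP (n : ℕ) (A : Matrix (Fin n) (Fin n) ℝ) : Prop :=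
  ∀ (k : ℕ), 2 ≤ k → ∀ (r c : Fin k → Fin n), StrictMono r → StrictMono c →
    tropPermSup k (-1) ((A.map ((↑) : ℝ → WithBot ℝ)).submatrix r c) <
      tropPermSup k 1 ((A.map ((↑) : ℝ → WithBot ℝ)).submatrix r c)

/-- Max-plus matrix product. -/
def tropMul {l m p : ℕ} (A : Matrix (Fin l) (Fin m) (WithBot ℝ))
    (B : Matrix (Fin m) (Fin p) (WithBot ℝ)) : Matrix (Fin l) (Fin p) (WithBot ℝ) :=
  fun i j => Finset.univ.sup fun k => A i k + B k j

/-- Tropical identity matrix. -/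
def tropId (n : ℕ) : Matrix (Fin n) (Fin n) (WithBot ℝ) :=
  fun i j => if i = j then 0 else ⊥

/-- Tropical elementary Jacobi matrix `x_i(s)` (0-indexed: `s` in position `(i, i+1)`). -/
def xUp (n : ℕ) (i : ℕ) (s : ℝ) : Matrix (Fin n) (Fin n) (WithBot ℝ) :=
  fun a b => if a = b then 0 else if a.val = i ∧ b.val = i + 1 then (s : WithBot ℝ) else ⊥

/-- Tropical elementary Jacobi matrix `x̄_i(s)` (0-indexed: `s` in position `(i+1, i)`). -/
def xLow (n : ℕ) (i : ℕ) (s : ℝ) : Matrix (Fin n) (Fin n) (WithBot ℝ) :=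
  fun a b => if a = b then 0 else if a.val = i + 1 ∧ b.val = i then (s : WithBot ℝ) else ⊥

/-- Tropical elementary Jacobi matrix `x∘_i(s)` (0-indexed diagonal matrix,
`s` in position `(i, i)`). -/
def xDiag (n : ℕ) (i : ℕ) (s : ℝ) : Matrix (Fin n) (Fin n) (WithBot ℝ) :=
  fun a b => if a = b then (if a.val = i then (s : WithBot ℝ) else 0) else ⊥

/-- Entry of `W` looked up with natural-number (0-based) indices. -/
def wnat (n : ℕ) (W : Matrix (Fin n) (Fin n) ℝ) (a b : ℕ) : ℝ :=
  if h : a < n ∧ b < n then W ⟨a, h.1⟩ ⟨b, h.2⟩ else 0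

/-- The left part `L(W)` of the canonical planar network:
`L(W) = ⊙_{k=1}^{n−1} ⊙_{t=1}^{k} x̄_{n−k+t−1}(W_{n−k+t, t})` (1-indexed). -/
def Lmat (n : ℕ) (W : Matrix (Fin n) (Fin n) ℝ) : Matrix (Fin n) (Fin n) (WithBot ℝ) :=
  ((List.range (n - 1)).flatMap fun k => (List.range (k + 1)).map fun t =>
      xLow n (n - k + t - 2) (wnat n W (n - k + t - 1) t)).foldl tropMul (tropId n)

/-- The diagonal part `D(W) = x∘_1(W_{1,1}) ⊙ ⋯ ⊙ x∘_n(W_{n,n})` (1-indexed). -/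
def Dmat (n : ℕ) (W : Matrix (Fin n) (Fin n) ℝ) : Matrix (Fin n) (Fin n) (WithBot ℝ) :=
  ((List.range n).map fun i => xDiag n i (wnat n W i i)).foldl tropMul (tropId n)

/-- The tropical transfer matrix of the canonical totally connected planar
network `G_n` with weight matrix `W`: `T(W) = L(W) ⊙ D(W) ⊙ (L(Wᵀ))ᵀ`. -/
def Tmat (n : ℕ) (W : Matrix (Fin n) (Fin n) ℝ) : Matrix (Fin n) (Fin n) (WithBot ℝ) :=
  tropMul (tropMul (Lmat n W) (Dmat n W)) (Matrix.transpose (Lmat n W.transpose))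


section Aux
open Finset

abbrev MLe {n m : ℕ} (A B : Matrix (Fin n) (Fin m) (WithBot ℝ)) : Prop := ∀ i j, A i j ≤ B i j

lemma le_tropMul {n : ℕ} (A B : Matrix (Fin n) (Fin n) (WithBot ℝ)) (i j k : Fin n) :
    A i k + B k j ≤ tropMul A B i j :=
  Finset.le_sup (f := fun k => A i k + B k j) (mem_univ k)

lemma tropMul_mono {n : ℕ} {A A' B B' : Matrix (Fin n) (Fin n) (WithBot ℝ)}
    (h1 : MLe A A') (h2 : MLe B B') : MLe (tropMul A B) (tropMul A' B') := by
  intro i j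
  refine Finset.sup_le fun k _ => ?_
  exact le_trans (add_le_add (h1 i k) (h2 k j)) (le_tropMul A' B' i j k)

lemma tropMul_id_right {n : ℕ} (A : Matrix (Fin n) (Fin n) (WithBot ℝ)) :
    tropMul A (tropId n) = A := by
  funext i j
  refine le_antisymm (Finset.sup_le fun k _ => ?_) ?_
  · by_cases h : k = j
    · subst h; simp [tropId]
    · simp [tropId, h]
  · simpa [tropId] using le_tropMul A (tropId n) i j j

lemma tropMul_id_left {n : ℕ} (A : Matrix (Fin n) (Fin n) (WithBot ℝ)) :
    tropMul (tropId n) A = A := by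
  funext i j
  refine le_antisymm (Finset.sup_le fun k _ => ?_) ?_
  · by_cases h : i = k
    · subst h; simp [tropId]
    · simp [tropId, h]
  · simpa [tropId] using le_tropMul (tropId n) A i j i

lemma xLow_ge_id {n : ℕ} (m : ℕ) (s : ℝ) : MLe (tropId n) (xLow n m s) := by
  intro i j
  by_cases h : i = j
  · subst h; simp [tropId, xLow]
  · simp [tropId, h]

lemma fold_mono_sublist {n : ℕ} {l₁ l₂ : List (Matrix (Fin n) (Fin n) (WithBot ℝ))}
    (hl : l₁.Sublist l₂) (hid : ∀ F ∈ l₂, MLe (tropId n) F) :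
    ∀ P₁ P₂ : Matrix (Fin n) (Fin n) (WithBot ℝ), MLe P₁ P₂ →
      MLe (l₁.foldl tropMul P₁) (l₂.foldl tropMul P₂) := by
  induction hl with
  | slnil => intro P₁ P₂ h; simpa using h
  | cons x hsub ih =>
    intro P₁ P₂ h
    simp only [List.foldl_cons]
    refine ih (fun F hF => hid F (List.mem_cons_of_mem _ hF)) P₁ (tropMul P₂ x) ?_
    have h2 : MLe P₂ (tropMul P₂ x) := by
      have := tropMul_mono (A := P₂) (A' := P₂) (fun i j => le_refl _)
        (hid x List.mem_cons_self)
      rwa [tropMul_id_right] at this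
    exact fun i j => le_trans (h i j) (h2 i j)
  | cons_cons x hsub ih =>
    intro P₁ P₂ h
    simp only [List.foldl_cons]
    exact ih (fun F hF => hid F (List.mem_cons_of_mem _ hF)) _ _
      (tropMul_mono h (fun i j => le_refl _))

lemma fold_le_inv {n : ℕ} {B : Matrix (Fin n) (Fin n) (WithBot ℝ)}
    {l : List (Matrix (Fin n) (Fin n) (WithBot ℝ))}
    (hstep : ∀ F ∈ l, ∀ P : Matrix (Fin n) (Fin n) (WithBot ℝ), MLe P B → MLe (tropMul P F) B) :
    ∀ P : Matrix (Fin n) (Fin n) (WithBot ℝ), MLe P B → MLe (l.foldl tropMul P) B := by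
  induction l with
  | nil => intro P h; simpa using h
  | cons x xs ih =>
    intro P h
    simp only [List.foldl_cons]
    exact ih (fun F hF => hstep F (List.mem_cons_of_mem _ hF)) _
      (hstep x List.mem_cons_self P h)

end Aux

section Aux2
open Finset

lemma tropMul_xLow {n : ℕ} (F : Matrix (Fin n) (Fin n) (WithBot ℝ)) (m : ℕ)
    (hm : m + 1 < n) (s : ℝ) :
    tropMul F (xLow n m s) = fun i j =>
      if j.val = m then F i j ⊔ (F i ⟨m+1, hm⟩ + (s : WithBot ℝ)) else F i j := by
  funext i j
  by_cases hj : j.val = m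
  · simp only [hj, if_pos rfl]
    have hne : (⟨m+1, hm⟩ : Fin n) ≠ j := Fin.ne_of_val_ne (by simp; omega)
    refine le_antisymm (Finset.sup_le fun k _ => ?_) ?_
    · by_cases hk : k = j
      · subst hk; simp [xLow]
      · by_cases hk2 : k.val = m + 1
        · have hx : xLow n m s k j = (s : WithBot ℝ) := by
            simp only [xLow]
            rw [if_neg hk, if_pos ⟨hk2, hj⟩]
          rw [hx]
          have : k = ⟨m+1, hm⟩ := Fin.ext hk2
          subst this
          exact le_sup_right
        · have hx : xLow n m s k j = ⊥ := by
            simp only [xLow]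
            rw [if_neg hk, if_neg (by tauto)]
          simp [hx]
    · refine sup_le ?_ ?_
      · simpa [xLow] using le_tropMul F (xLow n m s) i j j
      · have h1 : xLow n m s ⟨m+1, hm⟩ j = (s : WithBot ℝ) := by
          simp [xLow, hne, hj]
        have := le_tropMul F (xLow n m s) i j ⟨m+1, hm⟩
        rwa [h1] at this
  · simp only [if_neg hj]
    refine le_antisymm (Finset.sup_le fun k _ => ?_) ?_
    · by_cases hk : k = j
      · subst hk; simp [xLow]
      · have hx : xLow n m s k j = ⊥ := by
          simp only [xLow]
          rw [if_neg hk, if_neg (by tauto)]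
        simp [hx]
    · simpa [xLow] using le_tropMul F (xLow n m s) i j j

lemma tropMul_xDiag {n : ℕ} (F : Matrix (Fin n) (Fin n) (WithBot ℝ)) (m : ℕ) (s : ℝ) :
    tropMul F (xDiag n m s) = fun i j =>
      F i j + (if j.val = m then (s : WithBot ℝ) else 0) := by
  funext i j
  refine le_antisymm (Finset.sup_le fun k _ => ?_) ?_
  · by_cases hk : k = j
    · subst hk; simp [xDiag]
    · simp [xDiag, hk]
  · have := le_tropMul F (xDiag n m s) i j j
    simpa [xDiag] using this

lemma wnat_eq {n : ℕ} (W : Matrix (Fin n) (Fin n) ℝ) {a b : ℕ} (ha : a < n) (hb : b < n) :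
    wnat n W a b = W ⟨a, ha⟩ ⟨b, hb⟩ := by
  simp [wnat, ha, hb]

lemma Dmat_eq {n : ℕ} (W : Matrix (Fin n) (Fin n) ℝ) :
    Dmat n W = fun a b => if a = b then ((W a a : ℝ) : WithBot ℝ) else ⊥ := by
  have key : ∀ q, q ≤ n →
      (((List.range q).map fun i => xDiag n i (wnat n W i i)).foldl tropMul (tropId n)) =
        fun a b => if a = b then (if a.val < q then ((W a a : ℝ) : WithBot ℝ) else 0) else ⊥ := by
    intro q hq
    induction q with
    | zero => funext a b; simp [tropId]
    | succ q ih =>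
      rw [List.range_succ, List.map_append, List.foldl_append]
      rw [ih (Nat.le_of_succ_le hq)]
      simp only [List.map_cons, List.map_nil, List.foldl_cons, List.foldl_nil]
      change tropMul _ (xDiag n q (wnat n W q q)) = _
      refine (tropMul_xDiag _ q _).trans ?_
      funext a b
      by_cases hab : a = b
      · subst hab
        by_cases h1 : a.val < q
        · have h2 : a.val ≠ q := by omega
          simp [h1, h2, Nat.lt_succ_of_lt h1]
        · by_cases h2 : a.val = q
          · have hq' : q < n := by omega
            have haq : a = ⟨q, hq'⟩ := Fin.ext h2
            subst haq
            simp [h1, h2, wnat_eq W hq' hq']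
          · have h3 : ¬ a.val < q + 1 := by omega
            simp [h1, h2, h3]
      · simp [hab]
  have := key n (le_refl n)
  rw [Dmat, this]
  funext a b
  by_cases hab : a = b
  · subst hab; simp [a.isLt]
  · simp [hab]

/-- One-step embedding of an `n×n` tropical matrix into the lower-right corner
of an `(n+1)×(n+1)` matrix. -/
def Emb {n : ℕ} (M : Matrix (Fin n) (Fin n) (WithBot ℝ)) :
    Matrix (Fin (n+1)) (Fin (n+1)) (WithBot ℝ) :=
  fun a b =>
    if ha : a.val = 0 then (if b.val = 0 then 0 else ⊥)
    else if hb : b.val = 0 then ⊥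
    else M ⟨a.val - 1, by omega⟩ ⟨b.val - 1, by omega⟩

lemma Emb_zz {n : ℕ} (M : Matrix (Fin n) (Fin n) (WithBot ℝ)) {a b : Fin (n+1)}
    (ha : a.val = 0) (hb : b.val = 0) : Emb M a b = 0 := by simp [Emb, ha, hb]

lemma Emb_zl {n : ℕ} (M : Matrix (Fin n) (Fin n) (WithBot ℝ)) {a b : Fin (n+1)}
    (ha : a.val = 0) (hb : b.val ≠ 0) : Emb M a b = ⊥ := by simp [Emb, ha, hb]

lemma Emb_zr {n : ℕ} (M : Matrix (Fin n) (Fin n) (WithBot ℝ)) {a b : Fin (n+1)}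
    (ha : a.val ≠ 0) (hb : b.val = 0) : Emb M a b = ⊥ := by simp [Emb, ha, hb]

lemma Emb_ss {n : ℕ} (M : Matrix (Fin n) (Fin n) (WithBot ℝ)) {a b : Fin (n+1)}
    (ha : a.val ≠ 0) (hb : b.val ≠ 0) :
    Emb M a b = M ⟨a.val - 1, by omega⟩ ⟨b.val - 1, by omega⟩ := by simp [Emb, ha, hb]

lemma Emb_id {n : ℕ} : Emb (tropId n) = tropId (n+1) := by
  funext a b
  by_cases ha : a.val = 0
  · by_cases hb : b.val = 0
    · rw [Emb_zz _ ha hb, tropId, if_pos (Fin.ext (by omega))]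
    · rw [Emb_zl _ ha hb, tropId, if_neg (Fin.ne_of_val_ne (by omega))]
  · by_cases hb : b.val = 0
    · rw [Emb_zr _ ha hb, tropId, if_neg (Fin.ne_of_val_ne (by omega))]
    · rw [Emb_ss _ ha hb, tropId, tropId]
      by_cases hab : a.val = b.val
      · rw [if_pos (Fin.ext (show a.val - 1 = b.val - 1 by omega)),
          if_pos (Fin.ext hab)]
      · rw [if_neg (fun h => hab (by have := congrArg Fin.val h; simp at this; omega)),
          if_neg (fun h => hab (congrArg Fin.val h))]


lemma Emb_mul {n : ℕ} (A B : Matrix (Fin n) (Fin n) (WithBot ℝ)) :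
    Emb (tropMul A B) = tropMul (Emb A) (Emb B) := by
  funext a b
  by_cases ha : a.val = 0
  · by_cases hb : b.val = 0
    · rw [Emb_zz _ ha hb]
      refine le_antisymm ?_ (Finset.sup_le fun k _ => ?_)
      · have := le_tropMul (Emb A) (Emb B) a b ⟨0, by omega⟩
        rw [Emb_zz A ha rfl, Emb_zz B rfl hb] at this
        simpa using this
      · by_cases hk : k.val = 0
        · rw [Emb_zz A ha hk, Emb_zz B hk hb]; simp
        · rw [Emb_zl A ha hk]; simp
    · rw [Emb_zl _ ha hb]
      symm
      refine le_antisymm (Finset.sup_le fun k _ => ?_) bot_le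
      by_cases hk : k.val = 0
      · rw [Emb_zl B hk hb]; simp
      · rw [Emb_zl A ha hk]; simp
  · by_cases hb : b.val = 0
    · rw [Emb_zr _ ha hb]
      symm
      refine le_antisymm (Finset.sup_le fun k _ => ?_) bot_le
      by_cases hk : k.val = 0
      · rw [Emb_zr A ha hk]; simp
      · rw [Emb_zr B hk hb]; simp
    · rw [Emb_ss _ ha hb]
      refine le_antisymm (Finset.sup_le fun k _ => ?_) (Finset.sup_le fun k _ => ?_)
      · -- tropMul A B (a-1)(b-1) terms ≤ RHS
        have hk1 : ((⟨k.val + 1, by omega⟩ : Fin (n+1)) : ℕ) ≠ 0 := by simp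
        have e1 : Emb A a ⟨k.val + 1, by omega⟩ = A ⟨a.val - 1, by omega⟩ k := by
          rw [Emb_ss A ha hk1]; congr 1
        have e2 : Emb B ⟨k.val + 1, by omega⟩ b = B k ⟨b.val - 1, by omega⟩ := by
          rw [Emb_ss B hk1 hb]; congr 1
        have := le_tropMul (Emb A) (Emb B) a b ⟨k.val + 1, by omega⟩
        rw [e1, e2] at this
        exact le_trans (le_refl _) this
      · by_cases hk : k.val = 0
        · rw [Emb_zr A ha hk]; simp
        · rw [Emb_ss A ha hk, Emb_ss B hk hb]
          exact le_tropMul A B _ _ ⟨k.val - 1, by omega⟩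
  
lemma Emb_fold {n : ℕ} (l : List (Matrix (Fin n) (Fin n) (WithBot ℝ)))
    (P : Matrix (Fin n) (Fin n) (WithBot ℝ)) :
    (l.map Emb).foldl tropMul (Emb P) = Emb (l.foldl tropMul P) := by
  induction l generalizing P with
  | nil => rfl
  | cons x xs ih => simp only [List.map_cons, List.foldl_cons, ← Emb_mul, ih]

lemma Emb_xLow {n : ℕ} (m : ℕ) (s : ℝ) : Emb (xLow n m s) = xLow (n+1) (m+1) s := by
  funext a b
  by_cases ha : a.val = 0
  · by_cases hb : b.val = 0
    · rw [Emb_zz _ ha hb, xLow, if_pos (Fin.ext (by omega))]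
    · rw [Emb_zl _ ha hb, xLow, if_neg (Fin.ne_of_val_ne (by omega)), if_neg (by omega)]
  · by_cases hb : b.val = 0
    · rw [Emb_zr _ ha hb, xLow, if_neg (Fin.ne_of_val_ne (by omega)), if_neg (by omega)]
    · rw [Emb_ss _ ha hb]
      simp only [xLow]
      by_cases hab : a.val = b.val
      · rw [if_pos (Fin.ext (show a.val - 1 = b.val - 1 by omega)), if_pos (Fin.ext hab)]
      · rw [if_neg (fun h => hab (by have := congrArg Fin.val h; simp at this; omega)),
          if_neg (fun h => hab (congrArg Fin.val h))]
        by_cases hc : a.val - 1 = m + 1 ∧ b.val - 1 = m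
        · rw [if_pos (show (⟨a.val-1, by omega⟩ : Fin n).val = m + 1 ∧ (⟨b.val-1, by omega⟩ : Fin n).val = m from hc),
            if_pos (show a.val = m + 1 + 1 ∧ b.val = m + 1 by omega)]
        · rw [if_neg (show ¬((⟨a.val-1, by omega⟩ : Fin n).val = m + 1 ∧ (⟨b.val-1, by omega⟩ : Fin n).val = m) from hc),
            if_neg (show ¬(a.val = m + 1 + 1 ∧ b.val = m + 1) by omega)]

end Aux2

section Aux3
open Finset

lemma flatMap_congr' {α β : Type*} {l : List α} {f g : α → List β}
    (h : ∀ a ∈ l, f a = g a) : l.flatMap f = l.flatMap g := by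
  induction l with
  | nil => rfl
  | cons x xs ih =>
    simp only [List.flatMap_cons]
    rw [h x List.mem_cons_self, ih (fun a ha => h a (List.mem_cons_of_mem _ ha))]

lemma Lmat_small {n : ℕ} (hn : n ≤ 1) (W : Matrix (Fin n) (Fin n) ℝ) :
    Lmat n W = tropId n := by
  unfold Lmat
  rw [show n - 1 = 0 by omega]
  rfl

/-- Row-shifted submatrix. -/
def Wup {n : ℕ} (W : Matrix (Fin (n+2)) (Fin (n+2)) ℝ) : Matrix (Fin (n+1)) (Fin (n+1)) ℝ :=
  fun a b => W ⟨a.val + 1, by omega⟩ ⟨b.val, by omega⟩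

lemma wnat_up {n : ℕ} (W : Matrix (Fin (n+2)) (Fin (n+2)) ℝ) {r c : ℕ}
    (hr : r < n + 1) (hc : c < n + 1) :
    wnat (n+1) (Wup W) r c = wnat (n+2) W (r+1) c := by
  rw [wnat_eq _ hr hc, wnat_eq _ (by omega : r + 1 < n + 2) (by omega : c < n + 2)]
  rfl

lemma chainFold {n : ℕ} (s : ℕ → ℝ) (P : Matrix (Fin n) (Fin n) (WithBot ℝ)) :
    ∀ q, ∀ hq : q + 1 ≤ n,
      ((List.range q).map fun t => xLow n t (s t)).foldl tropMul P =
        fun i j => if h : j.val < q then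
            P i j ⊔ (P i ⟨j.val + 1, by omega⟩ + ((s j.val : ℝ) : WithBot ℝ))
          else P i j := by
  intro q
  induction q with
  | zero => intro _; funext i j; simp
  | succ q ih =>
    intro hq
    rw [List.range_succ, List.map_append, List.foldl_append, ih (by omega)]
    simp only [List.map_cons, List.map_nil, List.foldl_cons, List.foldl_nil]
    change tropMul _ (xLow n q (s q)) = _
    refine (tropMul_xLow _ q (by omega) (s q)).trans ?_
    funext i j
    by_cases hj : j.val = q
    · have h1 : ¬ j.val < q := by omega
      have h2 : ¬ q + 1 < q := by omega
      have h3 : j.val < q + 1 := by omega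
      simp only [if_pos hj, dif_neg h1, dif_neg h2, dif_pos h3, hj]
      simp [Nat.lt_irrefl]
    · simp only [if_neg hj]
      by_cases h1 : j.val < q
      · have h2 : j.val < q + 1 := by omega
        simp only [dif_pos h1, dif_pos h2]
      · have h2 : ¬ j.val < q + 1 := by omega
        simp only [dif_neg h1, dif_neg h2]

lemma Lmat_rec {n : ℕ} (W : Matrix (Fin (n+2)) (Fin (n+2)) ℝ) :
    Lmat (n+2) W =
      ((List.range (n+1)).map fun t => xLow (n+2) t (wnat (n+2) W (t+1) t)).foldl tropMul
        (Emb (Lmat (n+1) (Wup W))) := by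
  unfold Lmat
  rw [show n + 2 - 1 = n + 1 by omega]
  have hlast : (List.flatMap (fun k => (List.range (k + 1)).map fun t =>
      xLow (n+2) (n + 2 - k + t - 2) (wnat (n+2) W (n + 2 - k + t - 1) t)) [n]) =
      (List.range (n+1)).map fun t => xLow (n+2) t (wnat (n+2) W (t+1) t) := by
    simp only [List.flatMap_cons, List.flatMap_nil, List.append_nil]
    refine List.map_congr_left fun t ht => ?_
    rw [List.mem_range] at ht
    rw [show n + 2 - n + t - 2 = t by omega, show n + 2 - n + t - 1 = t + 1 by omega]
  have hblocks : (List.range n).flatMap (fun k => (List.range (k + 1)).map fun t =>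
      xLow (n+2) (n + 2 - k + t - 2) (wnat (n+2) W (n + 2 - k + t - 1) t)) =
      ((List.range n).flatMap (fun k => (List.range (k + 1)).map fun t =>
        xLow (n+1) (n + 1 - k + t - 2) (wnat (n+1) (Wup W) (n + 1 - k + t - 1) t))).map Emb := by
    rw [List.map_flatMap]
    refine flatMap_congr' fun k hk => ?_
    rw [List.mem_range] at hk
    rw [List.map_map]
    refine List.map_congr_left fun t ht => ?_
    rw [List.mem_range] at ht
    simp only [Function.comp_apply]
    rw [Emb_xLow, show n + 1 - k + t - 2 + 1 = n + 2 - k + t - 2 by omega]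
    rw [wnat_up W (by omega) (by omega), show n + 1 - k + t - 1 + 1 = n + 2 - k + t - 1 by omega]
  conv_lhs => rw [List.range_succ]
  rw [List.flatMap_append, hlast, List.foldl_append, hblocks, ← Emb_id, Emb_fold]
  rfl

end Aux3

section Aux4
open Finset

lemma Lmat_rec_entry {n : ℕ} (W : Matrix (Fin (n+2)) (Fin (n+2)) ℝ) (i j : Fin (n+2)) :
    Lmat (n+2) W i j = if h : j.val < n+1 then
        Emb (Lmat (n+1) (Wup W)) i j ⊔
          (Emb (Lmat (n+1) (Wup W)) i ⟨j.val+1, by omega⟩ +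
            ((wnat (n+2) W (j.val+1) j.val : ℝ) : WithBot ℝ))
      else Emb (Lmat (n+1) (Wup W)) i j := by
  rw [Lmat_rec]
  exact congrFun (congrFun (chainFold (fun t => wnat (n+2) W (t+1) t) _ (n+1) (by omega)) i) j

/-- Weight of the uppermost descending path: `∑_{r=j+1}^{i} W_{r,j}` (0-indexed). -/
def SSr (n : ℕ) (W : Matrix (Fin n) (Fin n) ℝ) (i j : ℕ) : ℝ :=
  ∑ r ∈ Finset.range (i - j), wnat n W (j + 1 + r) j

def RowPara (n : ℕ) (W : Matrix (Fin n) (Fin n) ℝ) : Prop :=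
  ∀ r c : ℕ, r < n → c + 2 ≤ r → wnat n W r c ≤ wnat n W r (c + 1)

lemma SSr_of_le {n : ℕ} {W : Matrix (Fin n) (Fin n) ℝ} {i j : ℕ} (h : i ≤ j) :
    SSr n W i j = 0 := by
  simp [SSr, Nat.sub_eq_zero_of_le h]

lemma SSr_step {n : ℕ} (W : Matrix (Fin (n+2)) (Fin (n+2)) ℝ) {i j : ℕ}
    (hj : j < i) (hi : i ≤ n + 1) :
    SSr (n+2) W i j = SSr (n+1) (Wup W) (i-1) j + wnat (n+2) W (j+1) j := by
  unfold SSr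
  rw [show i - j = ((i-1) - j) + 1 by omega, Finset.sum_range_succ']
  congr 1
  refine Finset.sum_congr rfl fun r hr => ?_
  rw [Finset.mem_range] at hr
  rw [wnat_up W (by omega) (by omega)]
  exact congrArg (fun x => wnat (n+2) W x j) (by omega)

lemma RowPara_up {n : ℕ} {W : Matrix (Fin (n+2)) (Fin (n+2)) ℝ} (hp : RowPara (n+2) W) :
    RowPara (n+1) (Wup W) := by
  intro r c hr hc
  rw [wnat_up W hr (by omega), wnat_up W hr (by omega)]
  exact hp (r+1) c (by omega) (by omega)

lemma SSr_up_le {n : ℕ} {W : Matrix (Fin (n+2)) (Fin (n+2)) ℝ} (hp : RowPara (n+2) W)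
    {i j : ℕ} (hj0 : 1 ≤ j) (hji : j ≤ i) (hi : i ≤ n + 1) :
    SSr (n+1) (Wup W) (i-1) (j-1) ≤ SSr (n+2) W i j := by
  unfold SSr
  rw [show (i-1) - (j-1) = i - j by omega]
  refine Finset.sum_le_sum fun r hr => ?_
  rw [Finset.mem_range] at hr
  rw [wnat_up W (by omega) (by omega)]
  calc wnat (n+2) W (j - 1 + 1 + r + 1) (j-1)
      ≤ wnat (n+2) W (j - 1 + 1 + r + 1) (j - 1 + 1) := hp _ _ (by omega) (by omega)
    _ = wnat (n+2) W (j + 1 + r) j := by rw [show j - 1 + 1 + r + 1 = j + 1 + r by omega,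
        show j - 1 + 1 = j by omega]

lemma lowL : ∀ (n : ℕ) (W : Matrix (Fin n) (Fin n) ℝ) (i j : Fin n), j ≤ i →
    ((SSr n W i.val j.val : ℝ) : WithBot ℝ) ≤ Lmat n W i j := by
  intro n
  induction n using Nat.strong_induction_on with
  | _ n ih =>
    match n with
    | 0 => intro W i j _; exact i.elim0
    | 1 =>
      intro W i j hji
      have hij : i = j := Fin.ext (by omega)
      subst hij
      rw [Lmat_small (by omega), SSr_of_le (le_refl _)]
      simp [tropId]
    | (m+2) =>
      intro W i j hji
      rw [Lmat_rec_entry]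
      set M := Emb (Lmat (m+1) (Wup W)) with hM
      have hdiag : ∀ a : Fin (m+2), (0 : WithBot ℝ) ≤ M a a := by
        intro a
        by_cases ha : a.val = 0
        · rw [hM, Emb_zz _ ha ha]
        · rw [hM, Emb_ss _ ha ha]
          have := ih (m+1) (by omega) (Wup W) ⟨a.val - 1, by omega⟩ ⟨a.val - 1, by omega⟩
            (le_refl _)
          rw [SSr_of_le (le_refl _)] at this
          simpa using this
      by_cases hj : j.val < m + 1
      · rw [dif_pos hj]
        by_cases hij : j = i
        · subst hij
          rw [SSr_of_le (le_refl _)]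
          refine le_trans ?_ le_sup_left
          simpa using hdiag j
        · have hlt : j.val < i.val := by
            rcases lt_or_eq_of_le (Fin.le_def.mp hji) with h | h
            · exact h
            · exact absurd (Fin.ext h.symm) (Ne.symm hij)
          refine le_trans ?_ le_sup_right
          have hi0 : i.val ≠ 0 := by omega
          have hb0 : ((⟨j.val + 1, by omega⟩ : Fin (m+2)) : ℕ) ≠ 0 := by simp
          rw [hM, Emb_ss _ hi0 hb0]
          have hrec := ih (m+1) (by omega) (Wup W) ⟨i.val - 1, by omega⟩ ⟨j.val, by omega⟩
            (by rw [Fin.le_def]; simp; omega)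
          rw [SSr_step W hlt (by omega), WithBot.coe_add]
          exact add_le_add hrec (le_refl _)
      · rw [dif_neg hj]
        have hij : i = j := Fin.ext (by omega)
        subst hij
        rw [SSr_of_le (le_refl _)]
        simpa using hdiag i

lemma upL : ∀ (n : ℕ) (W : Matrix (Fin n) (Fin n) ℝ), RowPara n W → ∀ i j : Fin n,
    Lmat n W i j ≤ if j ≤ i then ((SSr n W i.val j.val : ℝ) : WithBot ℝ) else ⊥ := by
  intro n
  induction n using Nat.strong_induction_on with
  | _ n ih =>
    match n with
    | 0 => intro W _ i j; exact i.elim0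
    | 1 =>
      intro W _ i j
      have hij : i = j := Fin.ext (by omega)
      subst hij
      rw [Lmat_small (by omega), SSr_of_le (le_refl _), if_pos (le_refl _)]
      simp [tropId]
    | (m+2) =>
      intro W hp i j
      rw [Lmat_rec_entry]
      set M := Emb (Lmat (m+1) (Wup W)) with hMdef
      have hM : ∀ a b : Fin (m+2), M a b ≤
          if b ≤ a then ((SSr (m+2) W a.val b.val : ℝ) : WithBot ℝ) else ⊥ := by
        intro a b
        by_cases ha : a.val = 0
        · by_cases hb : b.val = 0
          · rw [hMdef, Emb_zz _ ha hb, if_pos (Fin.le_def.mpr (by omega)),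
              show a.val = 0 from ha, show b.val = 0 from hb, SSr_of_le (le_refl _)]
            simp
          · rw [hMdef, Emb_zl _ ha hb]
            exact bot_le
        · by_cases hb : b.val = 0
          · rw [hMdef, Emb_zr _ ha hb]
            exact bot_le
          · rw [hMdef, Emb_ss _ ha hb]
            have h2 := ih (m+1) (by omega) (Wup W) (RowPara_up hp)
              ⟨a.val - 1, by omega⟩ ⟨b.val - 1, by omega⟩
            by_cases hba : b ≤ a
            · rw [if_pos (by rw [Fin.le_def]; simp; omega : (⟨b.val-1, by omega⟩ : Fin (m+1)) ≤ ⟨a.val-1, by omega⟩)] at h2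
              rw [if_pos hba]
              refine le_trans h2 (WithBot.coe_le_coe.2 ?_)
              exact SSr_up_le hp (by omega) (Fin.le_def.mp hba) (by omega)
            · rw [if_neg (by rw [Fin.le_def]; simp; rw [Fin.le_def] at hba; omega :
                ¬ (⟨b.val-1, by omega⟩ : Fin (m+1)) ≤ ⟨a.val-1, by omega⟩)] at h2
              rw [if_neg hba]
              exact h2
      by_cases hj : j.val < m + 1
      · rw [dif_pos hj]
        refine sup_le (hM i j) ?_
        by_cases hi0 : i.val = 0
        · have : M i ⟨j.val + 1, by omega⟩ = ⊥ := by
            rw [hMdef]; exact Emb_zl _ hi0 (by simp)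
          rw [this, WithBot.bot_add]
          exact bot_le
        · have hb0 : ((⟨j.val + 1, by omega⟩ : Fin (m+2)) : ℕ) ≠ 0 := by simp
          rw [hMdef, Emb_ss _ hi0 hb0]
          have h2 := ih (m+1) (by omega) (Wup W) (RowPara_up hp)
            ⟨i.val - 1, by omega⟩ ⟨(⟨j.val + 1, by omega⟩ : Fin (m+2)).val - 1, by omega⟩
          by_cases hlt : j.val < i.val
          · rw [if_pos (by rw [Fin.le_def]; simp; omega)] at h2
            have hji : j ≤ i := Fin.le_def.mpr (by omega)
            rw [if_pos hji]
            refine le_trans (add_le_add h2 (le_refl _)) ?_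
            rw [← WithBot.coe_add, WithBot.coe_le_coe]
            rw [SSr_step W hlt (by omega)]
            simp
          · rw [if_neg (by rw [Fin.le_def]; simp; omega)] at h2
            have h3 : Lmat (m+1) (Wup W) ⟨i.val - 1, by omega⟩
                ⟨(⟨j.val + 1, by omega⟩ : Fin (m+2)).val - 1, by omega⟩ = ⊥ := le_bot_iff.mp h2
            rw [h3, WithBot.bot_add]
            exact bot_le
      · rw [dif_neg hj]
        exact hM i j

end Aux4

section Aux5
open Finset

lemma phi_diag {n : ℕ} (A : Matrix (Fin n) (Fin n) ℝ) (i : Fin n) :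
    phi n A i i = A i i := by simp [phi]

lemma phi_lower {n : ℕ} (A : Matrix (Fin n) (Fin n) ℝ) {i j : Fin n} (h : j < i) :
    phi n A i j = A i j - A (fpred i) j := by
  rw [phi, if_neg (ne_of_gt h), if_neg (not_lt.2 h.le)]

lemma phi_upper {n : ℕ} (A : Matrix (Fin n) (Fin n) ℝ) {i j : Fin n} (h : i < j) :
    phi n A i j = A i j - A i (fpred j) := by
  rw [phi, if_neg (ne_of_lt h), if_pos h]

lemma tropPermSup_two (B : Matrix (Fin 2) (Fin 2) (WithBot ℝ)) :
    tropPermSup 2 1 B = B 0 0 + B 1 1 ∧ tropPermSup 2 (-1) B = B 0 1 + B 1 0 := by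
  constructor
  · unfold tropPermSup
    have h : (Finset.univ.filter fun σ : Equiv.Perm (Fin 2) => Equiv.Perm.sign σ = 1)
        = {1} := by decide
    rw [h, Finset.sup_singleton]
    simp [Fin.sum_univ_two]
  · unfold tropPermSup
    have h : (Finset.univ.filter fun σ : Equiv.Perm (Fin 2) => Equiv.Perm.sign σ = -1)
        = {Equiv.swap 0 1} := by decide
    rw [h, Finset.sup_singleton]
    rw [Fin.sum_univ_two]
    congr 1 <;> simp

lemma minor2 {n : ℕ} {A : Matrix (Fin n) (Fin n) ℝ}
    (hA : IsTropTN n (A.map ((↑) : ℝ → WithBot ℝ))) {a b c d : Fin n}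
    (hab : a < b) (hcd : c < d) : A a d + A b c ≤ A a c + A b d := by
  have hmono : ∀ (u v : Fin n), u < v → StrictMono (fun t : Fin 2 => if t.val = 0 then u else v) := by
    intro u v huv x y hxy
    rw [Fin.lt_def] at hxy
    have hy2 : y.val < 2 := y.isLt
    have hx : x.val = 0 := by omega
    have hy : y.val = 1 := by omega
    show (if x.val = 0 then u else v) < (if y.val = 0 then u else v)
    rw [if_pos hx, if_neg (by omega)]
    exact huv
  have h := hA 2 (fun t => if t.val = 0 then a else b) (fun t => if t.val = 0 then c else d)
    (hmono a b hab) (hmono c d hcd)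
  set B := (A.map ((↑) : ℝ → WithBot ℝ)).submatrix
    (fun t : Fin 2 => if t.val = 0 then a else b)
    (fun t : Fin 2 => if t.val = 0 then c else d) with hB
  obtain ⟨h1, h2⟩ := tropPermSup_two B
  rw [h1, h2] at h
  have e00 : B 0 0 = ((A a c : ℝ) : WithBot ℝ) := by simp [hB, Matrix.submatrix_apply]
  have e01 : B 0 1 = ((A a d : ℝ) : WithBot ℝ) := by simp [hB, Matrix.submatrix_apply]
  have e10 : B 1 0 = ((A b c : ℝ) : WithBot ℝ) := by simp [hB, Matrix.submatrix_apply]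
  have e11 : B 1 1 = ((A b d : ℝ) : WithBot ℝ) := by simp [hB, Matrix.submatrix_apply]
  rw [e00, e01, e10, e11, ← WithBot.coe_add, ← WithBot.coe_add, WithBot.coe_le_coe] at h
  exact h

lemma trap_phi {n : ℕ} {A : Matrix (Fin n) (Fin n) ℝ}
    (hA : IsTropTN n (A.map ((↑) : ℝ → WithBot ℝ))) : WeakTrapeze n (phi n A) := by
  intro i hi
  have hpi : fpred i < i := by
    rw [Fin.lt_def]; show i.val - 1 < i.val; omega
  rw [phi_lower A hpi, phi_diag, phi_upper A hpi, phi_diag]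
  have := minor2 hA hpi hpi
  linarith

lemma para_phi {n : ℕ} {A : Matrix (Fin n) (Fin n) ℝ}
    (hA : IsTropTN n (A.map ((↑) : ℝ → WithBot ℝ))) : WeakPara n (phi n A) := by
  intro i j h
  have hj1 : j.val + 1 < n := by have := i.isLt; omega
  set j1 : Fin n := ⟨j.val + 1, hj1⟩ with hj1def
  have hjj1 : j < j1 := by rw [Fin.lt_def]; simp [hj1def]
  have hji : j < i := by rw [Fin.lt_def]; omega
  have hj1i : j1 < i := by rw [Fin.lt_def]; simp [hj1def]; omega
  have hpi : fpred i < i := by rw [Fin.lt_def]; show i.val - 1 < i.val; omega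
  have hjp : j < fpred i := by rw [Fin.lt_def]; show j.val < i.val - 1; omega
  have hj1p : j1 ≤ fpred i := by rw [Fin.le_def]; show j.val + 1 ≤ i.val - 1; omega
  constructor
  · rw [phi_lower A hji, phi_lower A hj1i]
    have := minor2 hA hpi hjj1
    linarith
  · rw [phi_upper A hji, phi_upper A hj1i]
    have := minor2 hA hjj1 hpi
    linarith

lemma wnat_transpose {n : ℕ} (A : Matrix (Fin n) (Fin n) ℝ) (a b : ℕ) :
    wnat n A.transpose a b = wnat n A b a := by
  unfold wnat
  by_cases h : a < n ∧ b < n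
  · rw [dif_pos h, dif_pos ⟨h.2, h.1⟩]; rfl
  · rw [dif_neg h, dif_neg (by tauto)]

lemma phi_transpose {n : ℕ} (A : Matrix (Fin n) (Fin n) ℝ) :
    phi n A.transpose = (phi n A).transpose := by
  funext i j
  rcases lt_trichotomy i j with h | h | h
  · show phi n A.transpose i j = phi n A j i
    rw [phi_upper A.transpose h, phi_lower A h]
    rfl
  · subst h
    show phi n A.transpose i i = phi n A i i
    rw [phi_diag, phi_diag]
    rfl
  · show phi n A.transpose i j = phi n A j i
    rw [phi_lower A.transpose h, phi_upper A h]
    rfl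

lemma wnat_phi_lower {n : ℕ} (A : Matrix (Fin n) (Fin n) ℝ) {a b : ℕ} (h : b < a) (ha : a < n) :
    wnat n (phi n A) a b = wnat n A a b - wnat n A (a-1) b := by
  have hb : b < n := by omega
  rw [wnat_eq _ ha hb, wnat_eq _ ha hb, wnat_eq _ (by omega : a - 1 < n) hb]
  rw [phi_lower A (by rw [Fin.lt_def]; exact h)]
  rfl

lemma wnat_phi_diag {n : ℕ} (A : Matrix (Fin n) (Fin n) ℝ) {a : ℕ} (ha : a < n) :
    wnat n (phi n A) a a = wnat n A a a := by
  rw [wnat_eq _ ha ha, wnat_eq _ ha ha, phi_diag]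

lemma tele_low {n : ℕ} (A : Matrix (Fin n) (Fin n) ℝ) {i j : ℕ} (hji : j ≤ i) (hi : i < n) :
    SSr n (phi n A) i j = wnat n A i j - wnat n A j j := by
  unfold SSr
  have : ∀ r ∈ Finset.range (i - j), wnat n (phi n A) (j + 1 + r) j =
      wnat n A (j + (r+1)) j - wnat n A (j + r) j := by
    intro r hr
    rw [Finset.mem_range] at hr
    rw [wnat_phi_lower A (by omega) (by omega)]
    congr 2 <;> omega
  rw [Finset.sum_congr rfl this, Finset.sum_range_sub (f := fun r => wnat n A (j + r) j)]
  rw [show j + (i - j) = i by omega]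
  simp

/-- The `RowPara` property for `phi A`. -/
lemma rowPara_phi {n : ℕ} {A : Matrix (Fin n) (Fin n) ℝ}
    (hA : IsTropTN n (A.map ((↑) : ℝ → WithBot ℝ))) : RowPara n (phi n A) := by
  intro r c hr hc
  have hc1 : c + 1 < n := by omega
  rw [wnat_eq _ hr (by omega), wnat_eq _ hr hc1]
  have := (para_phi hA ⟨r, hr⟩ ⟨c, by omega⟩ hc).1
  exact this

lemma rowPara_phi_t {n : ℕ} {A : Matrix (Fin n) (Fin n) ℝ}
    (hA : IsTropTN n (A.map ((↑) : ℝ → WithBot ℝ))) : RowPara n (phi n A).transpose := by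
  intro r c hr hc
  have hc1 : c + 1 < n := by omega
  rw [wnat_transpose, wnat_transpose, wnat_eq _ (by omega) hr, wnat_eq _ hc1 hr]
  have := (para_phi hA ⟨r, hr⟩ ⟨c, by omega⟩ hc).2
  exact this

def NatTrap (n : ℕ) (W : Matrix (Fin n) (Fin n) ℝ) : Prop :=
  ∀ m : ℕ, m + 1 < n →
    wnat n W (m+1) m + wnat n W m m + wnat n W m (m+1) ≤ wnat n W (m+1) (m+1)

lemma natTrap_phi {n : ℕ} {A : Matrix (Fin n) (Fin n) ℝ}
    (hA : IsTropTN n (A.map ((↑) : ℝ → WithBot ℝ))) : NatTrap n (phi n A) := by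
  intro m hm
  have hm' : m < n := by omega
  rw [wnat_eq _ hm hm', wnat_eq _ hm' hm', wnat_eq _ hm' hm, wnat_eq _ hm hm]
  have := trap_phi hA ⟨m+1, hm⟩ (by simp)
  convert this using 3 <;> rfl

end Aux5

section Aux6
open Finset

lemma SSr_split {n : ℕ} (W : Matrix (Fin n) (Fin n) ℝ) {i c : ℕ} (h : c + 1 ≤ i) :
    SSr n W i c = wnat n W (c+1) c + ∑ r ∈ Finset.range (i - c - 1), wnat n W (c+2+r) c := by
  unfold SSr
  rw [show i - c = (i - c - 1) + 1 by omega, Finset.sum_range_succ']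
  rw [add_comm]
  congr 1
  refine Finset.sum_congr rfl fun r hr => ?_
  exact congrArg (fun x => wnat n W x c) (by omega)

lemma SSr_shift {n : ℕ} (W : Matrix (Fin n) (Fin n) ℝ) (i c : ℕ) :
    SSr n W i (c+1) = ∑ r ∈ Finset.range (i - c - 1), wnat n W (c+2+r) (c+1) := by
  unfold SSr
  rw [show i - (c+1) = i - c - 1 by omega]

lemma term_step {n : ℕ} {W : Matrix (Fin n) (Fin n) ℝ} (hp : RowPara n W)
    (hpt : RowPara n W.transpose) (ht : NatTrap n W) {i j c : ℕ}
    (hci : c + 1 ≤ i) (hcj : c + 1 ≤ j) (hi : i < n) (hj : j < n) :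
    SSr n W i c + wnat n W c c + SSr n W.transpose j c ≤
      SSr n W i (c+1) + wnat n W (c+1) (c+1) + SSr n W.transpose j (c+1) := by
  have e1 := SSr_split W hci
  have e2 := SSr_split W.transpose hcj
  have b1 : ∑ r ∈ Finset.range (i - c - 1), wnat n W (c+2+r) c ≤ SSr n W i (c+1) := by
    rw [SSr_shift]
    exact Finset.sum_le_sum fun r hr => hp (c+2+r) c
      (by rw [Finset.mem_range] at hr; omega) (by omega)
  have b2 : ∑ r ∈ Finset.range (j - c - 1), wnat n W.transpose (c+2+r) c ≤
      SSr n W.transpose j (c+1) := by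
    rw [SSr_shift]
    exact Finset.sum_le_sum fun r hr => hpt (c+2+r) c
      (by rw [Finset.mem_range] at hr; omega) (by omega)
  have b3 := ht c (by omega)
  have e3 : wnat n W.transpose (c+1) c = wnat n W c (c+1) := wnat_transpose W _ _
  rw [e1, e2, e3]
  linarith

lemma term_le {n : ℕ} {W : Matrix (Fin n) (Fin n) ℝ} (hp : RowPara n W)
    (hpt : RowPara n W.transpose) (ht : NatTrap n W) {i j : ℕ}
    (hi : i < n) (hj : j < n) :
    ∀ d c, c + d = min i j →
      SSr n W i c + wnat n W c c + SSr n W.transpose j c ≤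
        SSr n W i (min i j) + wnat n W (min i j) (min i j) +
          SSr n W.transpose j (min i j) := by
  intro d
  induction d with
  | zero =>
    intro c h
    rw [show c = min i j by omega]
  | succ d ih =>
    intro c h
    refine le_trans (term_step hp hpt ht (by omega) (by omega) hi hj) (ih (c+1) (by omega))

lemma term_eval_left {n : ℕ} (A : Matrix (Fin n) (Fin n) ℝ) (i j : Fin n)
    (hij : i.val ≤ j.val) :
    SSr n (phi n A) i.val i.val + wnat n (phi n A) i.val i.val +
      SSr n (phi n A).transpose j.val i.val = A i j := by
  rw [SSr_of_le (le_refl _), ← phi_transpose, tele_low A.transpose hij j.isLt,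
    wnat_phi_diag A i.isLt, wnat_transpose, wnat_transpose,
    wnat_eq A i.isLt j.isLt, wnat_eq A i.isLt i.isLt]
  simp [Fin.eta]

lemma term_eval_right {n : ℕ} (A : Matrix (Fin n) (Fin n) ℝ) (i j : Fin n)
    (hij : j.val ≤ i.val) :
    SSr n (phi n A) i.val j.val + wnat n (phi n A) j.val j.val +
      SSr n (phi n A).transpose j.val j.val = A i j := by
  rw [SSr_of_le (le_refl _), tele_low A hij i.isLt, wnat_phi_diag A (by omega : j.val < n),
    wnat_eq A i.isLt j.isLt, wnat_eq A (by omega : j.val < n) (by omega : j.val < n)]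
  simp

lemma LD_entry {n : ℕ} (W : Matrix (Fin n) (Fin n) ℝ) (i c : Fin n) :
    tropMul (Lmat n W) (Dmat n W) i c = Lmat n W i c + ((W c c : ℝ) : WithBot ℝ) := by
  rw [Dmat_eq]
  refine le_antisymm (Finset.sup_le fun k _ => ?_) ?_
  · by_cases hk : k = c
    · subst hk; simp
    · simp [hk]
  · have := le_tropMul (Lmat n W) (fun a b => if a = b then ((W a a : ℝ) : WithBot ℝ) else ⊥)
      i c c
    simpa using this

lemma Tmat_entry {n : ℕ} (W : Matrix (Fin n) (Fin n) ℝ) (i j : Fin n) :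
    Tmat n W i j = Finset.univ.sup
      (fun c => Lmat n W i c + ((W c c : ℝ) : WithBot ℝ) + Lmat n W.transpose j c) := by
  show Finset.univ.sup
      (fun c => tropMul (Lmat n W) (Dmat n W) i c + (Lmat n W.transpose).transpose c j) = _
  refine Finset.sup_congr rfl fun c _ => ?_
  rw [LD_entry, Matrix.transpose_apply]

lemma Tmat_phi {n : ℕ} {A : Matrix (Fin n) (Fin n) ℝ}
    (hA : IsTropTN n (A.map ((↑) : ℝ → WithBot ℝ))) (i j : Fin n) :
    Tmat n (phi n A) i j = ((A i j : ℝ) : WithBot ℝ) := by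
  set W := phi n A with hW
  have hp := rowPara_phi hA
  have hpt := rowPara_phi_t hA
  have ht := natTrap_phi hA
  have key : ∀ c : ℕ, c ≤ i.val → c ≤ j.val →
      SSr n W i.val c + wnat n W c c + SSr n W.transpose j.val c ≤ A i j := by
    intro c hci hcj
    refine le_trans (term_le hp hpt ht i.isLt j.isLt (min i.val j.val - c) c (by omega)) ?_
    rcases le_total i.val j.val with h | h
    · rw [min_eq_left h]
      exact le_of_eq (term_eval_left A i j h)
    · rw [min_eq_right h]
      exact le_of_eq (term_eval_right A i j h)
  have up : Tmat n W i j ≤ ((A i j : ℝ) : WithBot ℝ) := by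
    rw [Tmat_entry]
    refine Finset.sup_le fun c _ => ?_
    by_cases hci : c ≤ i
    · by_cases hcj : c ≤ j
      · have u1 := upL n W hp i c
        rw [if_pos hci] at u1
        have u2 := upL n W.transpose hpt j c
        rw [if_pos hcj] at u2
        refine le_trans (add_le_add (add_le_add u1 (le_refl _)) u2) ?_
        rw [show W c c = wnat n W c.val c.val from (wnat_eq W c.isLt c.isLt).symm]
        rw [← WithBot.coe_add, ← WithBot.coe_add, WithBot.coe_le_coe]
        exact key c.val (Fin.le_def.mp hci) (Fin.le_def.mp hcj)
      · have u2 := upL n W.transpose hpt j c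
        rw [if_neg hcj] at u2
        rw [le_bot_iff.mp u2, WithBot.add_bot]
        exact bot_le
    · have u1 := upL n W hp i c
      rw [if_neg hci] at u1
      rw [le_bot_iff.mp u1, WithBot.bot_add, WithBot.bot_add]
      exact bot_le
  have low : ((A i j : ℝ) : WithBot ℝ) ≤ Tmat n W i j := by
    rw [Tmat_entry]
    rcases le_total i j with hij | hij
    · have l1 := lowL n W i i (le_refl _)
      have l2 := lowL n W.transpose j i hij
      refine le_trans ?_ (Finset.le_sup (f := fun c =>
        Lmat n W i c + ((W c c : ℝ) : WithBot ℝ) + Lmat n W.transpose j c) (mem_univ i))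
      show ((A i j : ℝ) : WithBot ℝ) ≤ Lmat n W i i + ((W i i : ℝ) : WithBot ℝ) + Lmat n W.transpose j i
      rw [show W i i = wnat n W i.val i.val from (wnat_eq W i.isLt i.isLt).symm]
      rw [show ((A i j : ℝ) : WithBot ℝ) =
        ↑(SSr n W i.val i.val + wnat n W i.val i.val + SSr n W.transpose j.val i.val) from
        congrArg _ (term_eval_left A i j (Fin.le_def.mp hij)).symm]
      rw [WithBot.coe_add, WithBot.coe_add]
      exact add_le_add (add_le_add l1 (le_refl _)) l2
    · have l1 := lowL n W i j hij
      have l2 := lowL n W.transpose j j (le_refl _)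
      refine le_trans ?_ (Finset.le_sup (f := fun c =>
        Lmat n W i c + ((W c c : ℝ) : WithBot ℝ) + Lmat n W.transpose j c) (mem_univ j))
      show ((A i j : ℝ) : WithBot ℝ) ≤ Lmat n W i j + ((W j j : ℝ) : WithBot ℝ) + Lmat n W.transpose j j
      rw [show W j j = wnat n W j.val j.val from (wnat_eq W j.isLt j.isLt).symm]
      rw [show ((A i j : ℝ) : WithBot ℝ) =
        ↑(SSr n W i.val j.val + wnat n W j.val j.val + SSr n W.transpose j.val j.val) from
        congrArg _ (term_eval_right A i j (Fin.le_def.mp hij)).symm]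
      rw [WithBot.coe_add, WithBot.coe_add]
      exact add_le_add (add_le_add l1 (le_refl _)) l2
  exact le_antisymm up low

end Aux6

/-- every tropical totally nonnegative matrix with real entries is
the tropical transfer matrix of the canonical planar network, with weights
`φ(A)` satisfying the weak trapeze and parallelogram inequalities. -/
theorem TN_is_transfer_matrix (n : ℕ) (A : Matrix (Fin n) (Fin n) ℝ)
    (hA : IsTropTN n (A.map ((↑) : ℝ → WithBot ℝ))) :
    (WeakTrapeze n (phi n A) ∧ WeakPara n (phi n A)) ∧
      Tmat n (phi n A) = A.map ((↑) : ℝ → WithBot ℝ) := by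
  refine ⟨⟨trap_phi hA, para_phi hA⟩, ?_⟩
  funext i j
  rw [Tmat_phi hA i j, Matrix.map_apply]
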